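/- Let p be a prime, n ≥ 2, 1 ≤ k ≤ n-1, and let r ∈ {0, ..., p-2} with r ≡ n (mod p-1). Define a = ∑ C(k,j), the sum over all j with 1 ≤ j ≤ k and j ≡ r (mod p-1). If r = 0 and (p-1) ∤ k, then a ≡ 0 (mod p). -/

import Mathlib

theorem stmt_10 (p n k r : ℕ) (hp : p.Prime) (hn : 2 ≤ n)
    (hk1 : 1 ≤ k) (hk2 : k ≤ n - 1)
    (hr : r ≤ p - 2) (hrn : r ≡ n [MOD p - 1])
    (hr0 : r = 0) (hndvd : ¬ (p - 1) ∣ k) :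
    ((∑ j ∈ (Finset.Icc 1 k).filter (fun j => j ≡ r [MOD p - 1]), k.choose j : ℕ) :
      ZMod p) = 0 := by
  classical
  subst hr0
  haveI : Fact p.Prime := ⟨hp⟩
  have hk0 : k ≠ 0 := by omega
  have hcard : Fintype.card (ZMod p) = p := ZMod.card p
  have hsum : ∀ i : ℕ, (∑ x : (ZMod p)ˣ, ((x : ZMod p) ^ i)) =
      if (p - 1) ∣ i then -1 else 0 := by
    intro i
    have := FiniteField.sum_pow_units (ZMod p) i
    rwa [hcard] at this
  -- sum over units equals sum over nonzero elements
  set φ : (ZMod p)ˣ ↪ ZMod p := ⟨fun x => x, fun _ _ h => Units.ext h⟩ with hφ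
  have hmap : Finset.univ.map φ = Finset.univ \ {0} := by
    ext x
    simp only [Finset.mem_map, Finset.mem_univ, true_and, Finset.mem_sdiff,
      Finset.mem_singleton, hφ, Function.Embedding.coeFn_mk]
    exact ⟨fun ⟨u, hu⟩ => hu ▸ u.ne_zero, fun hx => ⟨Units.mk0 x hx, rfl⟩⟩
  have hunits : ∀ f : ZMod p → ZMod p,
      (∑ x : (ZMod p)ˣ, f x) = ∑ z ∈ Finset.univ \ {0}, f z := by
    intro f
    rw [← hmap, Finset.sum_map]
    rfl
  -- sum over all of ZMod p of y^k is 0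
  have hall : (∑ y : ZMod p, y ^ k) = 0 := by
    rw [← Finset.sum_sdiff (Finset.subset_univ ({0} : Finset (ZMod p))),
      Finset.sum_singleton, zero_pow hk0, add_zero, ← hunits (· ^ k), hsum, if_neg hndvd]
  -- evaluate T two ways
  have hT1 : (∑ x : (ZMod p)ˣ, ((x : ZMod p) + 1) ^ k) = -1 := by
    rw [hunits (fun z => (z + 1) ^ k)]
    have : (∑ z ∈ Finset.univ \ {0}, ((z : ZMod p) + 1) ^ k)
        = (∑ z : ZMod p, (z + 1) ^ k) - 1 := by
      rw [← Finset.sum_sdiff (Finset.subset_univ ({0} : Finset (ZMod p))),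
        Finset.sum_singleton, zero_add, one_pow]
      ring
    rw [this]
    have hshift : (∑ z : ZMod p, (z + 1) ^ k) = ∑ y : ZMod p, y ^ k :=
      Fintype.sum_bijective _ (Equiv.addRight (1 : ZMod p)).bijective _ _ (fun _ => rfl)
    rw [hshift, hall]
    ring
  have hT2 : (∑ x : (ZMod p)ˣ, ((x : ZMod p) + 1) ^ k)
      = ∑ j ∈ (Finset.range (k + 1)).filter (fun j => (p - 1) ∣ j),
          (k.choose j : ZMod p) * (-1) := by
    have expand : ∀ x : (ZMod p)ˣ, ((x : ZMod p) + 1) ^ k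
        = ∑ j ∈ Finset.range (k + 1), (x : ZMod p) ^ j * (k.choose j : ZMod p) := by
      intro x
      rw [add_pow]
      simp [mul_comm]
    simp_rw [expand]
    rw [Finset.sum_comm]
    rw [Finset.sum_filter]
    apply Finset.sum_congr rfl
    intro j _
    rw [← Finset.sum_mul, hsum j]
    split_ifs with h
    · ring
    · ring
  rw [hT2] at hT1
  -- conclude
  have hsplit : (Finset.range (k + 1)).filter (fun j => (p - 1) ∣ j)
      = insert 0 ((Finset.Icc 1 k).filter (fun j => j ≡ 0 [MOD p - 1])) := by
    ext j
    simp only [Finset.mem_filter, Finset.mem_range, Finset.mem_insert, Finset.mem_Icc]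
    constructor
    · rintro ⟨hj, hd⟩
      rcases Nat.eq_zero_or_pos j with h0 | h0
      · exact Or.inl h0
      · exact Or.inr ⟨⟨h0, by omega⟩, (Nat.modEq_zero_iff_dvd).mpr hd⟩
    · rintro (rfl | ⟨⟨h1, h2⟩, hm⟩)
      · simp
      · exact ⟨by omega, (Nat.modEq_zero_iff_dvd).mp hm⟩
  rw [hsplit, Finset.sum_insert (by simp)] at hT1
  simp only [Nat.choose_zero_right, Nat.cast_one, one_mul] at hT1
  push_cast
  have hneg : (∑ x ∈ (Finset.Icc 1 k).filter (fun j => j ≡ 0 [MOD p - 1]),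
      (k.choose x : ZMod p) * (-1))
      = -∑ x ∈ (Finset.Icc 1 k).filter (fun j => j ≡ 0 [MOD p - 1]), (k.choose x : ZMod p) := by
    simp
  rw [hneg] at hT1
  have h0 : -(∑ x ∈ (Finset.Icc 1 k).filter (fun j => j ≡ 0 [MOD p - 1]),
      (k.choose x : ZMod p)) = 0 := by linear_combination hT1
  simpa using h0
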